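/- Let (M, Σ_M, μ_M) be a measure space whose measure is not purely infinite (there exists a measurable set A with 0 < μ_M(A) < ∞), let (N, d_N) be a metric space, and h : M → N strongly measurable. If (L²_h(M,N), D₂) is a complete geodesic space satisfying the global NPC comparison inequality — for every constant speed geodesic c : [0,1] → L²_h(M,N), every F ∈ L²_h(M,N) and every t ∈ [0,1], D₂(F, c(t))² ≤ (1−t) D₂(F, c(0))² + t D₂(F, c(1))² − (1−t)t D₂(c(0), c(1))² — then N is a complete geodesic space satisfying the global NPC comparison inequality: for every constant speed geodesic γ : [0,1] → N, every z ∈ N and every t ∈ [0,1], d_N(z, γ(t))² ≤ (1−t) d_N(z, γ(0))² + t d_N(z, γ(1))² − (1−t)t d_N(γ(0), γ(1))². -/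

import Mathlib

set_option linter.unusedSectionVars false

open MeasureTheory ENNReal Set Filter Topology TopologicalSpace

noncomputable section

namespace NLS

variable {α : Type*} [MeasurableSpace α] {N : Type*} [MetricSpace N]
  [MeasurableSpace N] [BorelSpace N]

/-- "Strongly measurable": Borel measurable with separable range. -/
def SM (f : α → N) : Prop :=
  Measurable f ∧ TopologicalSpace.IsSeparable (Set.range f)

theorem SM.aesm {f : α → N} (hf : SM f) (μ : Measure α) :
    AEStronglyMeasurable f μ :=
  (stronglyMeasurable_iff_measurable_separable.2 ⟨hf.1, hf.2⟩).aestronglyMeasurable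

/-- The `L^p` (extended) distance between two maps with values in a metric space;
for `p < ∞` it is `(∫ d(f x, g x)^p dμ)^{1/p}` and for `p = ∞` the essential supremum
of `x ↦ d(f x, g x)`. -/
def Dp (μ : Measure α) (p : ℝ≥0∞) (f g : α → N) : ℝ≥0∞ :=
  eLpNorm (fun x => dist (f x) (g x)) p μ

theorem Dp_self (μ : Measure α) (p : ℝ≥0∞) (f : α → N) : Dp μ p f f = 0 := by
  unfold Dp
  simp only [dist_self]
  exact eLpNorm_zero'

theorem Dp_comm (μ : Measure α) (p : ℝ≥0∞) (f g : α → N) : Dp μ p f g = Dp μ p g f := by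
  unfold Dp
  simp only [dist_comm]

theorem Dp_triangle {μ : Measure α} {p : ℝ≥0∞} (hp : 1 ≤ p) {f g k : α → N}
    (hf : AEStronglyMeasurable f μ) (hg : AEStronglyMeasurable g μ)
    (hk : AEStronglyMeasurable k μ) :
    Dp μ p f k ≤ Dp μ p f g + Dp μ p g k := by
  have h1 : Dp μ p f k ≤
      eLpNorm ((fun x => dist (f x) (g x)) + fun x => dist (g x) (k x)) p μ := by
    refine eLpNorm_mono fun x => ?_
    simp only [Pi.add_apply, Real.norm_eq_abs]
    rw [abs_of_nonneg dist_nonneg]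
    exact (dist_triangle (f x) (g x) (k x)).trans (le_abs_self _)
  exact h1.trans (eLpNorm_add_le (hf.dist hg) (hg.dist hk) hp)

/-- The nonlinear Lebesgue space `L^p_h(α, N)` with base map `h`, presented by
representatives: Borel measurable, separably valued maps at finite `D_p`-distance
from `h`.  Two representatives at `D_p`-distance `0` (equivalently, `μ`-a.e. equal)
represent the same element of the quotient nonlinear Lebesgue space; accordingly the
canonical structure below is a pseudometric space whose metric (separation) quotient is
the actual nonlinear Lebesgue space.  All topological and Borel-measurability notions for
the quotient correspond exactly to those of this pseudometric space. -/
def NLp (μ : Measure α) (h : α → N) (_hh : SM h) (p : ℝ≥0∞) : Type _ :=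
  {f : α → N // SM f ∧ Dp μ p f h ≠ ∞}

namespace NLp

variable {μ : Measure α} {h : α → N} {hh : SM h} {p : ℝ≥0∞}

def pem (μ : Measure α) (h : α → N) (hh : SM h) (p : ℝ≥0∞) (hp : 1 ≤ p) :
    PseudoEMetricSpace (NLp μ h hh p) where
  edist f g := Dp μ p f.1 g.1
  edist_self f := Dp_self μ p f.1
  edist_comm f g := Dp_comm μ p f.1 g.1
  edist_triangle f g k := Dp_triangle hp (f.2.1.aesm μ) (g.2.1.aesm μ) (k.2.1.aesm μ)

theorem dp_ne_top (hp : 1 ≤ p) (f g : NLp μ h hh p) : Dp μ p f.1 g.1 ≠ ∞ := by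
  have htri := Dp_triangle hp (f.2.1.aesm μ) (hh.aesm μ) (g.2.1.aesm μ)
  have h2 : Dp μ p h g.1 ≠ ∞ := by rw [Dp_comm]; exact g.2.2
  exact ne_top_of_le_ne_top (ENNReal.add_ne_top.2 ⟨f.2.2, h2⟩) htri

/-- The `D_p` pseudometric on the nonlinear Lebesgue space. -/
instance [hp : Fact (1 ≤ p)] : PseudoMetricSpace (NLp μ h hh p) :=
  @PseudoEMetricSpace.toPseudoMetricSpace _ (pem μ h hh p hp.out)
    (fun f g => dp_ne_top hp.out f g)

instance [Fact (1 ≤ p)] : MeasurableSpace (NLp μ h hh p) := borel _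
instance [Fact (1 ≤ p)] : BorelSpace (NLp μ h hh p) := ⟨rfl⟩

theorem edist_def [Fact (1 ≤ p)] (f g : NLp μ h hh p) :
    edist f g = Dp μ p f.1 g.1 := rfl

theorem dist_def [Fact (1 ≤ p)] (f g : NLp μ h hh p) :
    dist f g = (Dp μ p f.1 g.1).toReal := rfl

end NLp

/-- Absolutely continuous curves: `c ∈ AC^p([a,b], X)`. -/
def MemACp {X : Type*} [PseudoMetricSpace X] (p : ℝ≥0∞) (a b : ℝ) (c : ℝ → X) : Prop :=
  ∃ m : ℝ → ℝ, MemLp m p (volume.restrict (Set.Icc a b)) ∧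
    ∀ s t : ℝ, a ≤ s → s ≤ t → t ≤ b → dist (c s) (c t) ≤ ∫ r in s..t, m r

/-- The metric derivative of a curve at `t` (limit of difference quotients within `[a,b]`). -/
def mder {X : Type*} [PseudoMetricSpace X] (a b : ℝ) (c : ℝ → X) (t : ℝ) : ℝ :=
  limUnder (𝓝[Set.Icc a b \ {t}] t) fun s => dist (c s) (c t) / |s - t|

instance : Fact ((1 : ℝ≥0∞) ≤ 2) := ⟨one_le_two⟩

variable {μ : Measure α}

theorem integrable_mul2 {U V : α → ℝ} (hU : MemLp U 2 μ) (hV : MemLp V 2 μ) :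
    Integrable (fun x => U x * V x) μ := by
  have h1 : Integrable (fun x => (U x + V x) ^ 2) μ := by
    simpa [Pi.add_apply] using (hU.add hV).integrable_sq
  have h2 := hU.integrable_sq
  have h3 := hV.integrable_sq
  have heq : (fun x => U x * V x) = fun x => (((U x + V x) ^ 2 - U x ^ 2) - V x ^ 2) / 2 := by
    funext x; ring
  rw [heq]
  exact ((h1.sub h2).sub h3).div_const 2

theorem integral_sub_sq {U V : α → ℝ} (hU : MemLp U 2 μ) (hV : MemLp V 2 μ) (a b : ℝ) :
    ∫ x, (a * U x - b * V x) ^ 2 ∂μ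
      = a ^ 2 * ∫ x, U x ^ 2 ∂μ - 2 * (a * b) * ∫ x, U x * V x ∂μ
        + b ^ 2 * ∫ x, V x ^ 2 ∂μ := by
  have h2 := hU.integrable_sq
  have h3 := hV.integrable_sq
  have h4 := integrable_mul2 hU hV
  have hexp : ∀ x, (a * U x - b * V x) ^ 2
      = a ^ 2 * U x ^ 2 - 2 * (a * b) * (U x * V x) + b ^ 2 * V x ^ 2 := fun x => by ring
  simp_rw [hexp]
  have hf : Integrable (fun x => a ^ 2 * U x ^ 2 - 2 * (a * b) * (U x * V x)) μ :=
    (h2.const_mul _).sub (h4.const_mul _)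
  rw [integral_add hf (h3.const_mul (b ^ 2)),
    integral_sub (h2.const_mul (a ^ 2)) (h4.const_mul (2 * (a * b))),
    integral_const_mul, integral_const_mul, integral_const_mul]

theorem sq_int_zero {U : α → ℝ} (hU : MemLp U 2 μ) (hnn : ∀ x, 0 ≤ U x)
    (h0 : ∫ x, U x ^ 2 ∂μ = 0) : ∀ᵐ x ∂μ, U x = 0 := by
  have := (integral_eq_zero_iff_of_nonneg_ae
    (ae_of_all μ fun x => sq_nonneg (U x)) hU.integrable_sq).1 h0
  filter_upwards [this] with x hx
  have : U x ^ 2 = 0 := hx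
  exact pow_eq_zero_iff two_ne_zero |>.1 this

theorem integral_mul_le2 {U V : α → ℝ} (hU : MemLp U 2 μ) (hV : MemLp V 2 μ)
    {a b : ℝ} (ha : 0 ≤ a) (hb : 0 ≤ b) (hUnn : ∀ x, 0 ≤ U x) (hVnn : ∀ x, 0 ≤ V x)
    (hUa : ∫ x, U x ^ 2 ∂μ = a ^ 2) (hVb : ∫ x, V x ^ 2 ∂μ = b ^ 2) :
    ∫ x, U x * V x ∂μ ≤ a * b := by
  rcases eq_or_lt_of_le ha with rfl | hapos
  · have hU0 := sq_int_zero hU hUnn (by simpa using hUa)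
    have : ∫ x, U x * V x ∂μ = 0 := by
      rw [integral_congr_ae (g := fun _ => (0 : ℝ)) (by filter_upwards [hU0] with x hx; simp [hx])]
      simp
    simp [this]
  rcases eq_or_lt_of_le hb with rfl | hbpos
  · have hV0 := sq_int_zero hV hVnn (by simpa using hVb)
    have : ∫ x, U x * V x ∂μ = 0 := by
      rw [integral_congr_ae (g := fun _ => (0 : ℝ)) (by filter_upwards [hV0] with x hx; simp [hx])]
      simp
    simp [this]
  have key : 0 ≤ ∫ x, (b * U x - a * V x) ^ 2 ∂μ := integral_nonneg fun x => sq_nonneg _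
  rw [integral_sub_sq hU hV b a, hUa, hVb] at key
  nlinarith [key, hapos, hbpos, mul_pos hbpos hapos]

theorem lemB {U V Z : α → ℝ} (hU : MemLp U 2 μ) (hV : MemLp V 2 μ) (hZ : MemLp Z 2 μ)
    (hUnn : ∀ x, 0 ≤ U x) (hVnn : ∀ x, 0 ≤ V x) (hZnn : ∀ x, 0 ≤ Z x)
    (htri : ∀ x, Z x ≤ U x + V x)
    {a b : ℝ} (ha : 0 ≤ a) (hb : 0 ≤ b)
    (hUa : ∫ x, U x ^ 2 ∂μ = a ^ 2) (hVb : ∫ x, V x ^ 2 ∂μ = b ^ 2)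
    (hZab : ∫ x, Z x ^ 2 ∂μ = (a + b) ^ 2) :
    (∀ᵐ x ∂μ, U x + V x = Z x) ∧ (∀ᵐ x ∂μ, (a + b) * U x = a * Z x) := by
  have hUV := integral_mul_le2 hU hV ha hb hUnn hVnn hUa hVb
  have hsum_int : Integrable (fun x => (U x + V x) ^ 2) μ := by
    simpa [Pi.add_apply] using (hU.add hV).integrable_sq
  have e1 : ∫ x, (U x + V x) ^ 2 ∂μ = a ^ 2 + 2 * ∫ x, U x * V x ∂μ + b ^ 2 := by
    have h := integral_sub_sq hU hV 1 (-1)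
    simp_rw [show ∀ x, (1 * U x - (-1) * V x) ^ 2 = (U x + V x) ^ 2 from fun x => by ring] at h
    rw [h, hUa, hVb]; ring
  have hz_le : ∀ x, Z x ^ 2 ≤ (U x + V x) ^ 2 := fun x => by
    nlinarith [htri x, hZnn x, hUnn x, hVnn x]
  have e2 : ∫ x, Z x ^ 2 ∂μ ≤ ∫ x, (U x + V x) ^ 2 ∂μ :=
    integral_mono hZ.integrable_sq hsum_int hz_le
  have hUVeq : ∫ x, U x * V x ∂μ = a * b := by
    rw [hZab, e1] at e2; nlinarith [hUV, e2]
  have e3 : ∫ x, ((U x + V x) ^ 2 - Z x ^ 2) ∂μ = 0 := by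
    rw [integral_sub hsum_int hZ.integrable_sq, e1, hZab, hUVeq]; ring
  have h4 := (integral_eq_zero_iff_of_nonneg_ae
    (ae_of_all μ fun x => sub_nonneg.2 (hz_le x)) (hsum_int.sub hZ.integrable_sq)).1 e3
  have hsumZ : ∀ᵐ x ∂μ, U x + V x = Z x := by
    filter_upwards [h4] with x hx
    have hx' : (U x + V x) ^ 2 - Z x ^ 2 = 0 := hx
    nlinarith [htri x, hUnn x, hVnn x, hZnn x, hx']
  refine ⟨hsumZ, ?_⟩
  have hUZ : ∫ x, U x * Z x ∂μ = a ^ 2 + a * b := by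
    rw [integral_congr_ae (g := fun x => U x ^ 2 + U x * V x)
      (by filter_upwards [hsumZ] with x hx; rw [← hx]; ring)]
    rw [integral_add hU.integrable_sq (integrable_mul2 hU hV), hUa, hUVeq]
  have e5 := integral_sub_sq hU hZ (a + b) a
  rw [hUa, hUZ, hZab] at e5
  have e6 : ∫ x, ((a + b) * U x - a * Z x) ^ 2 ∂μ = 0 := by rw [e5]; ring
  have hint6 : Integrable (fun x => ((a + b) * U x - a * Z x) ^ 2) μ := by
    simpa [Pi.sub_apply] using ((hU.const_mul (a + b)).sub (hZ.const_mul a)).integrable_sq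
  have h7 := (integral_eq_zero_iff_of_nonneg_ae (ae_of_all μ fun x => sq_nonneg _) hint6).1 e6
  filter_upwards [h7] with x hx
  have hx' : ((a + b) * U x - a * Z x) ^ 2 = 0 := hx
  have := pow_eq_zero_iff (n := 2) two_ne_zero |>.1 hx'
  linarith

theorem lemD {U Z : α → ℝ} (hU : MemLp U 2 μ) (hZ : MemLp Z 2 μ) {c : ℝ} (hc : 0 ≤ c)
    (hZnn : ∀ x, 0 ≤ Z x) (hle : ∀ᵐ x ∂μ, c * Z x ≤ U x)
    (hint : ∫ x, U x ^ 2 ∂μ = c ^ 2 * ∫ x, Z x ^ 2 ∂μ) :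
    ∀ᵐ x ∂μ, U x = c * Z x := by
  have hi1 := hU.integrable_sq
  have hi2 := hZ.integrable_sq
  have e3 : ∫ x, (U x ^ 2 - c ^ 2 * Z x ^ 2) ∂μ = 0 := by
    rw [integral_sub hi1 (hi2.const_mul _), integral_const_mul, hint]; ring
  have h4 := (integral_eq_zero_iff_of_nonneg_ae
    (by filter_upwards [hle] with x hx
        simp only [Pi.sub_apply, Pi.zero_apply]
        nlinarith [hZnn x, hc, mul_nonneg hc (hZnn x), sq_nonneg (U x - c * Z x), hx])
    (hi1.sub (hi2.const_mul _))).1 e3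
  filter_upwards [h4, hle] with x h1 h2
  simp only [Pi.sub_apply, Pi.zero_apply] at h1
  nlinarith [hZnn x, hc, h1, h2, mul_nonneg hc (hZnn x)]


variable {h : α → N} {hh : SM h}

theorem dist_fun_memℒp (f g : NLp μ h hh 2) :
    MemLp (fun x => dist (f.1 x) (g.1 x)) 2 μ :=
  ⟨(f.2.1.aesm μ).dist (g.2.1.aesm μ),
    lt_top_iff_ne_top.2 (NLp.dp_ne_top one_le_two f g)⟩

theorem integral_sq_dist (f g : NLp μ h hh 2) :
    ∫ x, dist (f.1 x) (g.1 x) ^ 2 ∂μ = dist f g ^ 2 := by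
  have hmem := dist_fun_memℒp f g
  have hrw := hmem.eLpNorm_eq_integral_rpow_norm two_ne_zero ENNReal.ofNat_ne_top
  have h2 : dist f g = (eLpNorm (fun x => dist (f.1 x) (g.1 x)) 2 μ).toReal :=
    NLp.dist_def f g
  have hnn : 0 ≤ ∫ a, ‖dist (f.1 a) (g.1 a)‖ ^ (2:ℝ≥0∞).toReal ∂μ :=
    integral_nonneg fun a => by positivity
  rw [h2, hrw, ENNReal.toReal_ofReal (by positivity)]
  have h3 : ∀ a : α, ‖dist (f.1 a) (g.1 a)‖ ^ (2:ℝ≥0∞).toReal = dist (f.1 a) (g.1 a) ^ 2 := by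
    intro a
    rw [Real.norm_eq_abs, abs_of_nonneg dist_nonneg]
    norm_num [Real.rpow_natCast]
  simp_rw [h3] at hrw hnn ⊢
  rw [← Real.rpow_natCast (_ ^ (2:ℝ≥0∞).toReal⁻¹) 2, ← Real.rpow_mul hnn]
  norm_num

theorem lintegral_sq_dist (f g : NLp μ h hh 2) :
    ∫⁻ x, (ENNReal.ofReal (dist (f.1 x) (g.1 x))) ^ 2 ∂μ = edist f g ^ 2 := by
  have h1 : edist f g = eLpNorm (fun x => dist (f.1 x) (g.1 x)) 2 μ := NLp.edist_def f g
  rw [h1, eLpNorm_eq_lintegral_rpow_enorm_toReal two_ne_zero ENNReal.ofNat_ne_top]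
  have h3 : ∀ a : α, ‖dist (f.1 a) (g.1 a)‖ₑ ^ (2:ℝ≥0∞).toReal
      = (ENNReal.ofReal (dist (f.1 a) (g.1 a))) ^ 2 := by
    intro a
    rw [Real.enorm_eq_ofReal dist_nonneg,
      show ((2:ℝ≥0∞).toReal) = ((2:ℕ):ℝ) by norm_num, ENNReal.rpow_natCast]
  simp_rw [h3]
  rw [← ENNReal.rpow_natCast (_ ^ (1 / (2:ℝ≥0∞).toReal)) 2, ← ENNReal.rpow_mul]
  norm_num

section Emb

open scoped Classical

variable {A : Set α} {z : N}

theorem sm_piecewise (hA : MeasurableSet A) (hh : SM h) (y : N) :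
    SM (fun x => if x ∈ A then y else h x) := by
  refine ⟨Measurable.ite hA measurable_const hh.1, ?_⟩
  refine TopologicalSpace.IsSeparable.mono
    (((Set.countable_singleton y).isSeparable).union hh.2) ?_
  rintro b ⟨x, rfl⟩
  by_cases hx : x ∈ A
  · exact Or.inl (by simp only [Set.mem_singleton_iff]; exact if_pos hx)
  · exact Or.inr ⟨x, (if_neg hx).symm⟩

theorem emb_mem' (hA : MeasurableSet A) (hfin : μ A ≠ ∞)
    (hz : ∀ x ∈ A, dist (h x) z ≤ 1) (y : N) :
    Dp μ 2 (fun x => if x ∈ A then y else h x) h ≠ ∞ := by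
  have hb : ∀ x, ‖dist (if x ∈ A then y else h x) (h x)‖
      ≤ ‖A.indicator (fun _ => dist y z + 1) x‖ := by
    intro x
    by_cases hx : x ∈ A
    · rw [if_pos hx, Set.indicator_of_mem hx, Real.norm_eq_abs, Real.norm_eq_abs,
        abs_of_nonneg dist_nonneg]
      have h1 : dist y (h x) ≤ dist y z + dist z (h x) := dist_triangle _ _ _
      have h2 : dist z (h x) ≤ 1 := by rw [dist_comm]; exact hz x hx
      exact le_trans (by linarith) (le_abs_self _)
    · rw [if_neg hx, Set.indicator_of_notMem hx, dist_self]
  have hle := eLpNorm_mono hb (p := 2) (μ := μ)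
  have : eLpNorm (A.indicator fun _ => dist y z + 1) 2 μ
      = ‖dist y z + 1‖₊ * μ A ^ (1 / (2:ℝ≥0∞).toReal) :=
    eLpNorm_indicator_const hA two_ne_zero ENNReal.ofNat_ne_top
  refine ne_top_of_le_ne_top ?_ hle
  rw [this]
  exact ENNReal.mul_ne_top ENNReal.coe_ne_top
    (ENNReal.rpow_ne_top_of_nonneg (by norm_num) hfin)

/-- Embedding of `N` into the nonlinear Lebesgue space by modifying `h` on `A`. -/
def emb (μ : Measure α) (h : α → N) (hh : SM h) (hA : MeasurableSet A) (hfin : μ A ≠ ∞)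
    (hz : ∀ x ∈ A, dist (h x) z ≤ 1) (y : N) : NLp μ h hh 2 :=
  ⟨fun x => if x ∈ A then y else h x, sm_piecewise hA hh y, emb_mem' hA hfin hz y⟩

theorem emb_apply (hA : MeasurableSet A) (hfin : μ A ≠ ∞)
    (hz : ∀ x ∈ A, dist (h x) z ≤ 1) (y : N) {x : α} (hx : x ∈ A) :
    (emb μ h hh hA hfin hz y).1 x = y := by
  change (if x ∈ A then y else h x) = y
  rw [if_pos hx]

theorem emb_dist (hA : MeasurableSet A) (hfin : μ A ≠ ∞)
    (hz : ∀ x ∈ A, dist (h x) z ≤ 1) (y y' : N) :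
    dist (emb μ h hh hA hfin hz y) (emb μ h hh hA hfin hz y')
      = dist y y' * (μ A ^ (1 / (2:ℝ≥0∞).toReal)).toReal := by
  have h1 : (fun x => dist ((emb μ h hh hA hfin hz y).1 x) ((emb μ h hh hA hfin hz y').1 x))
      = A.indicator (fun _ => dist y y') := by
    funext x
    change dist (if x ∈ A then y else h x) (if x ∈ A then y' else h x) = _
    by_cases hx : x ∈ A
    · rw [if_pos hx, if_pos hx, Set.indicator_of_mem hx]
    · rw [if_neg hx, if_neg hx, Set.indicator_of_notMem hx, dist_self]
  rw [NLp.dist_def]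
  have h2 : Dp μ 2 (emb μ h hh hA hfin hz y).1 (emb μ h hh hA hfin hz y').1
      = eLpNorm (A.indicator fun _ => dist y y') 2 μ := by
    unfold Dp; rw [h1]
  rw [h2, eLpNorm_indicator_const hA two_ne_zero ENNReal.ofNat_ne_top,
    ENNReal.toReal_mul]
  congr 1
  simp [coe_nnnorm, Real.norm_eq_abs, abs_of_nonneg dist_nonneg]

end Emb

theorem pair_eq {c : ℝ → NLp μ h hh 2}
    (hd : ∀ s ∈ Icc (0:ℝ) 1, ∀ t ∈ Icc (0:ℝ) 1,
      dist (c s) (c t) = |s - t| * dist (c 0) (c 1))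
    {s t : ℝ} (hs : 0 ≤ s) (hst : s ≤ t) (ht : t ≤ 1) :
    ∀ᵐ x ∂μ, dist ((c s).1 x) ((c t).1 x)
      = (t - s) * dist ((c 0).1 x) ((c 1).1 x) := by
  set K := dist (c 0) (c 1) with hK
  have hK0 : (0:ℝ) ≤ K := dist_nonneg
  have hmem : ∀ a b : ℝ, MemLp (fun x => dist ((c a).1 x) ((c b).1 x)) 2 μ :=
    fun a b => dist_fun_memℒp (c a) (c b)
  have hint : ∀ a b : ℝ, a ∈ Icc (0:ℝ) 1 → b ∈ Icc (0:ℝ) 1 →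
      ∫ x, dist ((c a).1 x) ((c b).1 x) ^ 2 ∂μ = (|a - b| * K) ^ 2 := by
    intro a b hab hbb
    rw [integral_sq_dist, hd a hab b hbb]
  have h01 : (0:ℝ) ∈ Icc (0:ℝ) 1 := ⟨le_refl _, zero_le_one⟩
  have h11 : (1:ℝ) ∈ Icc (0:ℝ) 1 := ⟨zero_le_one, le_refl _⟩
  have hsI : s ∈ Icc (0:ℝ) 1 := ⟨hs, le_trans hst ht⟩
  have htI : t ∈ Icc (0:ℝ) 1 := ⟨le_trans hs hst, ht⟩
  have hZint : ∫ x, dist ((c 0).1 x) ((c 1).1 x) ^ 2 ∂μ = K ^ 2 := by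
    rw [integral_sq_dist]
  -- endpoint identity
  have hend : ∀ r : ℝ, r ∈ Icc (0:ℝ) 1 →
      ∀ᵐ x ∂μ, K * dist ((c 0).1 x) ((c r).1 x)
        = (r * K) * dist ((c 0).1 x) ((c 1).1 x) := by
    intro r hr
    have hB := lemB (μ := μ) (a := r * K) (b := (1 - r) * K)
      (hmem 0 r) (hmem r 1) (hmem 0 1)
      (fun x => dist_nonneg) (fun x => dist_nonneg) (fun x => dist_nonneg)
      (fun x => dist_triangle _ _ _)
      (mul_nonneg hr.1 hK0) (mul_nonneg (by linarith [hr.2]) hK0)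
      (by rw [hint 0 r h01 hr, abs_of_nonpos (by linarith [hr.1] : (0:ℝ) - r ≤ 0)]; ring)
      (by rw [hint r 1 hr h11, abs_of_nonpos (by linarith [hr.2] : r - 1 ≤ 0)]; ring)
      (by rw [hZint]; ring)
    have h2 := hB.2
    filter_upwards [h2] with x hx
    calc K * dist ((c 0).1 x) ((c r).1 x)
        = (r * K + (1 - r) * K) * dist ((c 0).1 x) ((c r).1 x) := by ring
      _ = (r * K) * dist ((c 0).1 x) ((c 1).1 x) := hx
  rcases eq_or_lt_of_le hK0 with hK00 | hKpos
  · -- K = 0 : everything collapses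
    have hM : ∀ᵐ x ∂μ, dist ((c s).1 x) ((c t).1 x) = 0 := by
      refine sq_int_zero (hmem s t) (fun x => dist_nonneg) ?_
      rw [hint s t hsI htI, ← hK00]; ring
    have hZ : ∀ᵐ x ∂μ, dist ((c 0).1 x) ((c 1).1 x) = 0 := by
      refine sq_int_zero (hmem 0 1) (fun x => dist_nonneg) ?_
      rw [hZint, ← hK00]; ring
    filter_upwards [hM, hZ] with x h1 h2
    rw [h1, h2]; ring
  · have hUs := hend s hsI
    have hUt := hend t htI
    have hle : ∀ᵐ x ∂μ, (t - s) * dist ((c 0).1 x) ((c 1).1 x)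
        ≤ dist ((c s).1 x) ((c t).1 x) := by
      filter_upwards [hUs, hUt] with x h1 h2
      have htri : dist ((c 0).1 x) ((c t).1 x)
          ≤ dist ((c 0).1 x) ((c s).1 x) + dist ((c s).1 x) ((c t).1 x) :=
        dist_triangle _ _ _
      have e1 : dist ((c 0).1 x) ((c s).1 x)
          = s * dist ((c 0).1 x) ((c 1).1 x) :=
        mul_left_cancel₀ (ne_of_gt hKpos) (h1.trans (by ring))
      have e2 : dist ((c 0).1 x) ((c t).1 x)
          = t * dist ((c 0).1 x) ((c 1).1 x) :=
        mul_left_cancel₀ (ne_of_gt hKpos) (h2.trans (by ring))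
      linarith [htri, e1, e2]
    have := lemD (μ := μ) (hmem s t) (hmem 0 1) (by linarith : (0:ℝ) ≤ t - s)
      (fun x => dist_nonneg) hle
      (by rw [hint s t hsI htI, hZint, abs_of_nonpos (by linarith)]; ring)
    filter_upwards [this] with x hx
    exact hx
/-- If the measure `μ` is not purely infinite (some measurable set has finite positive
measure) and `(L²_h(M,N), D₂)` is a complete geodesic space satisfying the global NPC
comparison inequality, then `N` is also a complete geodesic space satisfying the global
NPC comparison inequality. -/
theorem stmt18 {α : Type*} [MeasurableSpace α] {N : Type*} [MetricSpace N]
    [MeasurableSpace N] [BorelSpace N]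
    (μ : Measure α) (hμ : ∃ A : Set α, MeasurableSet A ∧ 0 < μ A ∧ μ A < ∞)
    (h : α → N) (hh : SM h)
    (hcomplete : CompleteSpace (NLp μ h hh 2))
    (hgeo : ∀ F F' : NLp μ h hh 2, ∃ c : ℝ → NLp μ h hh 2, c 0 = F ∧ c 1 = F' ∧
      ∀ s ∈ Set.Icc (0:ℝ) 1, ∀ t ∈ Set.Icc (0:ℝ) 1,
        dist (c s) (c t) = |s - t| * dist F F')
    (hnpc : ∀ c : ℝ → NLp μ h hh 2,
      (∀ s ∈ Set.Icc (0:ℝ) 1, ∀ t ∈ Set.Icc (0:ℝ) 1,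
        dist (c s) (c t) = |s - t| * dist (c 0) (c 1)) →
      ∀ F : NLp μ h hh 2, ∀ t ∈ Set.Icc (0:ℝ) 1,
        dist F (c t) ^ 2 ≤ (1 - t) * dist F (c 0) ^ 2 + t * dist F (c 1) ^ 2
          - (1 - t) * t * dist (c 0) (c 1) ^ 2) :
    CompleteSpace N ∧
    (∀ y y' : N, ∃ γ : ℝ → N, γ 0 = y ∧ γ 1 = y' ∧
      ∀ s ∈ Set.Icc (0:ℝ) 1, ∀ t ∈ Set.Icc (0:ℝ) 1,
        dist (γ s) (γ t) = |s - t| * dist y y') ∧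
    (∀ γ : ℝ → N,
      (∀ s ∈ Set.Icc (0:ℝ) 1, ∀ t ∈ Set.Icc (0:ℝ) 1,
        dist (γ s) (γ t) = |s - t| * dist (γ 0) (γ 1)) →
      ∀ z : N, ∀ t ∈ Set.Icc (0:ℝ) 1,
        dist z (γ t) ^ 2 ≤ (1 - t) * dist z (γ 0) ^ 2 + t * dist z (γ 1) ^ 2
          - (1 - t) * t * dist (γ 0) (γ 1) ^ 2) := by
    classical
  -- Step 0: shrink `A` to a positive finite measure set on which `h` is bounded
  obtain ⟨A₀, hA₀, hA₀pos, hA₀top⟩ := hμ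
  obtain ⟨T, hTc, hTsub⟩ := hh.2
  have hA₀ne : A₀.Nonempty := nonempty_of_measure_ne_zero hA₀pos.ne'
  have hNne : Nonempty N := ⟨h hA₀ne.choose⟩
  have hcov : A₀ ⊆ ⋃ z ∈ T, A₀ ∩ h ⁻¹' (Metric.ball z 1) := by
    intro x hx
    have hmem : h x ∈ closure T := hTsub (Set.mem_range_self x)
    obtain ⟨z, hzT, hz⟩ := Metric.mem_closure_iff.1 hmem 1 one_pos
    exact Set.mem_biUnion hzT ⟨hx, by simpa [Metric.mem_ball] using hz⟩
  have hex : ∃ z ∈ T, μ (A₀ ∩ h ⁻¹' (Metric.ball z 1)) ≠ 0 := by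
    by_contra hcon
    push_neg at hcon
    have h1 : μ (⋃ z ∈ T, A₀ ∩ h ⁻¹' (Metric.ball z 1)) = 0 :=
      (measure_biUnion_null_iff hTc).2 hcon
    exact hA₀pos.ne' (measure_mono_null hcov h1)
  obtain ⟨z, hzT, hApos⟩ := hex
  set A := A₀ ∩ h ⁻¹' (Metric.ball z 1) with hAdef
  have hA : MeasurableSet A := hA₀.inter (hh.1 measurableSet_ball)
  have hAfin : μ A ≠ ∞ := (lt_of_le_of_lt (measure_mono Set.inter_subset_left) hA₀top).ne
  have hz1 : ∀ x ∈ A, dist (h x) z ≤ 1 := fun x hx => le_of_lt hx.2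
  set ι : N → NLp μ h hh 2 := emb μ h hh hA hAfin hz1 with hι
  set cA : ℝ := (μ A ^ (1 / (2:ℝ≥0∞).toReal)).toReal with hcA
  have hid : ∀ y y' : N, dist (ι y) (ι y') = dist y y' * cA :=
    fun y y' => emb_dist hA hAfin hz1 y y'
  have hcA0 : 0 < cA := by
    apply ENNReal.toReal_pos
    · rw [ne_eq, ENNReal.rpow_eq_zero_iff]
      push_neg
      refine ⟨fun h0 => absurd h0 hApos, fun h0 => absurd h0 hAfin⟩
    · exact ENNReal.rpow_ne_top_of_nonneg (by norm_num) hAfin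
  -- Part 1 : completeness of N
  have hcomN : CompleteSpace N := by
    apply Metric.complete_of_cauchySeq_tendsto
    intro u hu
    have hcs : CauchySeq (fun n => ι (u n)) := by
      rw [Metric.cauchySeq_iff] at hu ⊢
      intro ε hε
      obtain ⟨Nn, hNn⟩ := hu (ε / (cA + 1)) (by positivity)
      refine ⟨Nn, fun m hm n hn => ?_⟩
      rw [hid]
      have h1 := hNn m hm n hn
      have h2 : dist (u m) (u n) * (cA + 1) < ε :=
        (lt_div_iff₀ (by positivity)).1 h1
      nlinarith [dist_nonneg (x := u m) (y := u n), hcA0]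
    obtain ⟨F, hF⟩ := cauchySeq_tendsto_of_complete hcs
    have hsmall : ∀ η : ℝ≥0∞, 0 < η →
        ∀ᶠ n in atTop, edist (ι (u n)) F ^ 2 ≤ η := by
      intro η hη
      rcases eq_or_ne η ∞ with rfl | hηt
      · exact Filter.Eventually.of_forall fun n => le_top
      have hr : 0 < min 1 η.toReal := lt_min one_pos (ENNReal.toReal_pos hη.ne' hηt)
      obtain ⟨n₀, hn₀⟩ := Metric.tendsto_atTop.1 hF _ hr
      filter_upwards [eventually_ge_atTop n₀] with n hn
      have hd := hn₀ n hn
      have e1 : edist (ι (u n)) F = ENNReal.ofReal (dist (ι (u n)) F) := edist_dist _ _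
      calc edist (ι (u n)) F ^ 2
          ≤ (ENNReal.ofReal (min 1 η.toReal)) ^ 2 := by
            rw [e1]; exact pow_le_pow_left₀ zero_le (ENNReal.ofReal_le_ofReal hd.le) 2
        _ ≤ ENNReal.ofReal (min 1 η.toReal) := by
            rw [pow_two]
            calc ENNReal.ofReal (min 1 η.toReal) * ENNReal.ofReal (min 1 η.toReal)
                ≤ 1 * ENNReal.ofReal (min 1 η.toReal) := by
                  gcongr
                  exact ENNReal.ofReal_le_one.2 (min_le_left _ _)
              _ = _ := one_mul _
        _ ≤ ENNReal.ofReal η.toReal := ENNReal.ofReal_le_ofReal (min_le_right _ _)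
        _ = η := ENNReal.ofReal_toReal hηt
    have hmeas : ∀ n : ℕ, AEMeasurable
        (fun x => (ENNReal.ofReal (dist (u n) (F.1 x))) ^ 2) (μ.restrict A) := by
      intro n
      have h1 : AEStronglyMeasurable (fun x => dist (u n) (F.1 x)) (μ.restrict A) :=
        aestronglyMeasurable_const.dist ((F.2.1.aesm μ).restrict)
      exact (ENNReal.measurable_ofReal.comp_aemeasurable h1.aemeasurable).pow_const 2
    set W : ℕ → ℝ≥0∞ := fun k =>
      (ENNReal.ofReal ((1/2:ℝ) ^ k)) ^ 2 * (μ A / 4 * 2⁻¹ ^ k) with hW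
    have hWpos : ∀ k, 0 < W k := by
      intro k
      rw [hW]
      apply ENNReal.mul_pos
      · exact pow_ne_zero 2 (by
          simp only [ne_eq, ENNReal.ofReal_eq_zero, not_le]
          positivity)
      · apply mul_ne_zero
        · simp [ENNReal.div_eq_zero_iff, hApos]
        · exact pow_ne_zero _ (by simp)
    have hsel : ∀ k : ℕ, ∃ n, k ≤ n ∧ edist (ι (u n)) F ^ 2 ≤ W k := fun k =>
      (((hsmall (W k) (hWpos k)).and (eventually_ge_atTop k)).exists).imp
        fun n hn => ⟨hn.2, hn.1⟩
    choose m hmk hmW using hsel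
    set B : ℕ → Set α := fun k =>
      {x | (ENNReal.ofReal ((1/2:ℝ) ^ k)) ^ 2
        ≤ (ENNReal.ofReal (dist (u (m k)) (F.1 x))) ^ 2} ∩ A with hB
    have hBk : ∀ k, μ (B k) ≤ μ A / 4 * 2⁻¹ ^ k := by
      intro k
      have hcheb := mul_meas_ge_le_lintegral₀ (hmeas (m k))
        ((ENNReal.ofReal ((1/2:ℝ) ^ k)) ^ 2)
      have hres : (μ.restrict A) {x | (ENNReal.ofReal ((1/2:ℝ)^k))^2
          ≤ (ENNReal.ofReal (dist (u (m k)) (F.1 x)))^2} = μ (B k) := by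
        rw [hB]
        exact Measure.restrict_apply' hA
      have hlin : ∫⁻ x in A, (ENNReal.ofReal (dist (u (m k)) (F.1 x))) ^ 2 ∂μ
          ≤ edist (ι (u (m k))) F ^ 2 := by
        rw [← lintegral_sq_dist (ι (u (m k))) F]
        calc ∫⁻ x in A, (ENNReal.ofReal (dist (u (m k)) (F.1 x))) ^ 2 ∂μ
            = ∫⁻ x in A, (ENNReal.ofReal (dist ((ι (u (m k))).1 x) (F.1 x))) ^ 2 ∂μ := by
              refine setLIntegral_congr_fun hA (fun x hx => ?_)
              rw [emb_apply hA hAfin hz1 _ hx]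
          _ ≤ _ := setLIntegral_le_lintegral _ _
      have hchain := le_trans hcheb (le_trans hlin (hmW k))
      rw [hres] at hchain
      exact (ENNReal.mul_le_mul_iff_right
        (pow_ne_zero 2 (by
          simp only [ne_eq, ENNReal.ofReal_eq_zero, not_le]
          positivity))
        (pow_ne_top ENNReal.ofReal_ne_top)).1 hchain
    have hUnion : μ (⋃ k, B k) ≤ μ A / 2 := by
      have h42 : μ A / 4 * 2 = μ A / 2 := by
        rw [div_eq_mul_inv, div_eq_mul_inv, mul_assoc]
        congr 1
        rw [show (4:ℝ≥0∞) = 2 * 2 by norm_num,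
          ENNReal.mul_inv (Or.inl two_ne_zero) (Or.inl ENNReal.ofNat_ne_top),
          mul_assoc, ENNReal.inv_mul_cancel two_ne_zero ENNReal.ofNat_ne_top, mul_one]
      calc μ (⋃ k, B k) ≤ ∑' k, μ (B k) := measure_iUnion_le _
        _ ≤ ∑' k : ℕ, μ A / 4 * 2⁻¹ ^ k := ENNReal.tsum_le_tsum hBk
        _ = μ A / 4 * 2 := by
            rw [ENNReal.tsum_mul_left, ENNReal.tsum_geometric,
              ENNReal.one_sub_inv_two, inv_inv]
        _ = μ A / 2 := h42
    have hgoodne : (A \ ⋃ k, B k).Nonempty := by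
      apply nonempty_of_measure_ne_zero (μ := μ)
      intro h0
      have h1 : μ A ≤ μ (A ∩ ⋃ k, B k) + μ (A \ ⋃ k, B k) :=
        measure_le_inter_add_diff μ A _
      rw [h0, add_zero] at h1
      have h2 : μ A ≤ μ A / 2 :=
        h1.trans ((measure_mono Set.inter_subset_right).trans hUnion)
      exact absurd (lt_of_le_of_lt h2 (ENNReal.half_lt_self hApos hAfin)) (lt_irrefl _)
    obtain ⟨x₀, hx₀A, hx₀B⟩ := hgoodne
    refine ⟨F.1 x₀, ?_⟩
    have hm : Tendsto m atTop atTop := tendsto_atTop_mono hmk tendsto_id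
    refine tendsto_nhds_of_cauchySeq_of_subseq hu hm ?_
    rw [tendsto_iff_dist_tendsto_zero]
    refine squeeze_zero (fun k => dist_nonneg) (fun k => ?_)
      (tendsto_pow_atTop_nhds_zero_of_lt_one (by norm_num) (by norm_num) :
        Tendsto (fun k : ℕ => (1/2:ℝ) ^ k) atTop (𝓝 0))
    by_contra hcon
    push_neg at hcon
    refine hx₀B (Set.mem_iUnion.2 ⟨k, ⟨?_, hx₀A⟩⟩)
    exact pow_le_pow_left₀ zero_le (ENNReal.ofReal_le_ofReal hcon.le) 2
  refine ⟨hcomN, ?_, ?_⟩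
  · -- Part 2 : geodesics in N
    intro y y'
    rcases eq_or_ne y y' with rfl | hyy'
    · exact ⟨fun _ => y, rfl, rfl, fun s hs t ht => by simp⟩
    obtain ⟨c, hc0, hc1, hcd⟩ := hgeo (ι y) (ι y')
    have hDpos : 0 < dist y y' := dist_pos.2 hyy'
    have hd : ∀ s ∈ Icc (0:ℝ) 1, ∀ t ∈ Icc (0:ℝ) 1,
        dist (c s) (c t) = |s - t| * dist (c 0) (c 1) := by
      intro s hs t ht
      rw [hcd s hs t ht, hc0, hc1]
    set S : Set α := {x | ∀ q q' : ℚ, 0 ≤ (q:ℝ) → (q:ℝ) ≤ (q':ℝ) → (q':ℝ) ≤ 1 →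
        x ∈ A → dist ((c q).1 x) ((c q').1 x) = ((q':ℝ) - (q:ℝ)) * dist y y'} with hS
    have hae : ∀ᵐ x ∂μ, x ∈ S := by
      show ∀ᵐ x ∂μ, ∀ q q' : ℚ, 0 ≤ (q:ℝ) → (q:ℝ) ≤ (q':ℝ) → (q':ℝ) ≤ 1 →
          x ∈ A → dist ((c q).1 x) ((c q').1 x) = ((q':ℝ) - (q:ℝ)) * dist y y'
      rw [ae_all_iff]
      intro q
      rw [ae_all_iff]
      intro q'
      by_cases hq : 0 ≤ (q:ℝ) ∧ (q:ℝ) ≤ (q':ℝ) ∧ (q':ℝ) ≤ 1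
      · obtain ⟨hq1, hq2, hq3⟩ := hq
        filter_upwards [pair_eq hd hq1 hq2 hq3] with x hx _ _ _ hxA
        rw [hx, hc0, hc1, emb_apply hA hAfin hz1 _ hxA, emb_apply hA hAfin hz1 _ hxA]
      · exact Filter.Eventually.of_forall fun x h1 h2 h3 _ =>
          absurd ⟨h1, h2, h3⟩ hq
    have hne : (A ∩ S).Nonempty := by
      apply nonempty_of_measure_ne_zero (μ := μ)
      intro h0
      have h1 : μ A ≤ μ (A ∩ S) + μ (A \ S) := measure_le_inter_add_diff μ A S
      have h2 : μ (A \ S) = 0 := by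
        refine measure_mono_null (fun x hx => hx.2) (MeasureTheory.ae_iff.1 hae)
      rw [h0, h2, add_zero] at h1
      exact hApos (le_antisymm h1 zero_le)
    obtain ⟨x₀, hx₀A, hx₀S⟩ := hne
    have hgd : ∀ q q' : ℚ, (q:ℝ) ∈ Icc (0:ℝ) 1 → (q':ℝ) ∈ Icc (0:ℝ) 1 →
        dist ((c q).1 x₀) ((c q').1 x₀) = |(q:ℝ) - (q':ℝ)| * dist y y' := by
      intro q q' hq hq'
      rcases le_total (q:ℝ) (q':ℝ) with hle | hle
      · rw [hx₀S q q' hq.1 hle hq'.2 hx₀A, abs_of_nonpos (by linarith)]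
        ring
      · rw [dist_comm, hx₀S q' q hq'.1 hle hq.2 hx₀A, abs_of_nonneg (by linarith)]
    -- dyadic approximations
    set r : ℕ → ℝ → ℚ := fun n t => (⌊t * 2 ^ n⌋ : ℚ) / 2 ^ n with hr
    have hrcast : ∀ n t, ((r n t : ℚ) : ℝ) = ((⌊t * 2 ^ n⌋ : ℤ) : ℝ) / 2 ^ n := by
      intro n t
      rw [hr]
      push_cast
      ring
    have hrmem : ∀ n : ℕ, ∀ t ∈ Icc (0:ℝ) 1, ((r n t : ℚ) : ℝ) ∈ Icc (0:ℝ) 1 := by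
      intro n t ht
      have h2n : (0:ℝ) < 2 ^ n := by positivity
      rw [hrcast]
      constructor
      · apply div_nonneg _ h2n.le
        have : (0:ℤ) ≤ ⌊t * 2 ^ n⌋ := Int.floor_nonneg.2 (mul_nonneg ht.1 h2n.le)
        exact_mod_cast this
      · rw [div_le_one h2n]
        calc ((⌊t * 2 ^ n⌋ : ℤ) : ℝ) ≤ t * 2 ^ n := Int.floor_le _
          _ ≤ 1 * 2 ^ n := by nlinarith [ht.2, h2n]
          _ = 2 ^ n := one_mul _
    have hrclose : ∀ n : ℕ, ∀ t : ℝ, |((r n t : ℚ) : ℝ) - t| ≤ (1/2) ^ n := by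
      intro n t
      have h2n : (0:ℝ) < 2 ^ n := by positivity
      rw [hrcast, abs_le]
      have hf1 : t * 2 ^ n - 1 < ((⌊t * 2 ^ n⌋ : ℤ) : ℝ) := Int.sub_one_lt_floor _
      have hf2 : ((⌊t * 2 ^ n⌋ : ℤ) : ℝ) ≤ t * 2 ^ n := Int.floor_le _
      have hpow : (1/2:ℝ) ^ n * 2 ^ n = 1 := by
        rw [← mul_pow]
        norm_num
      have hlow : t - (1/2) ^ n < ((⌊t * 2 ^ n⌋ : ℤ) : ℝ) / 2 ^ n := by
        rw [lt_div_iff₀ h2n]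
        nlinarith [hf1, h2n]
      have hup : ((⌊t * 2 ^ n⌋ : ℤ) : ℝ) / 2 ^ n ≤ t := by
        rw [div_le_iff₀ h2n]
        exact hf2
      constructor
      · linarith
      · linarith
    have hrt : ∀ t : ℝ, Tendsto (fun n => ((r n t : ℚ) : ℝ)) atTop (𝓝 t) := by
      intro t
      rw [tendsto_iff_dist_tendsto_zero]
      refine squeeze_zero (fun n => dist_nonneg) (fun n => ?_)
        (tendsto_pow_atTop_nhds_zero_of_lt_one (by norm_num) (by norm_num) :
          Tendsto (fun n : ℕ => (1/2:ℝ) ^ n) atTop (𝓝 0))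
      rw [Real.dist_eq]
      exact hrclose n t
    haveI : Nonempty N := ⟨y⟩
    haveI : CompleteSpace N := hcomN
    set γ : ℝ → N := fun t => limUnder atTop (fun n => (c ((r n t : ℚ) : ℝ)).1 x₀) with hγ
    have hconv : ∀ t ∈ Icc (0:ℝ) 1,
        Tendsto (fun n => (c ((r n t : ℚ) : ℝ)).1 x₀) atTop (𝓝 (γ t)) := by
      intro t ht
      have hcs2 : CauchySeq (fun n => (c ((r n t : ℚ) : ℝ)).1 x₀) := by
        rw [Metric.cauchySeq_iff]
        intro ε hε
        obtain ⟨n₀, hn₀⟩ := exists_pow_lt_of_lt_one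
          (show (0:ℝ) < ε / (2 * dist y y' + 1) by positivity)
          (show (1/2 : ℝ) < 1 by norm_num)
        refine ⟨n₀, fun a ha b hb => ?_⟩
        rw [hgd _ _ (hrmem a t ht) (hrmem b t ht)]
        have e1 := hrclose a t
        have e2 := hrclose b t
        have e3 : (1/2:ℝ) ^ a ≤ (1/2) ^ n₀ :=
          pow_le_pow_of_le_one (by norm_num) (by norm_num) ha
        have e4 : (1/2:ℝ) ^ b ≤ (1/2) ^ n₀ :=
          pow_le_pow_of_le_one (by norm_num) (by norm_num) hb
        have e5 : |((r a t : ℚ):ℝ) - ((r b t : ℚ):ℝ)| ≤ 2 * (1/2) ^ n₀ := by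
          calc |((r a t : ℚ):ℝ) - ((r b t : ℚ):ℝ)|
              ≤ |((r a t : ℚ):ℝ) - t| + |t - ((r b t : ℚ):ℝ)| := abs_sub_le _ _ _
            _ ≤ (1/2) ^ n₀ + (1/2) ^ n₀ := by
                rw [abs_sub_comm t]
                exact add_le_add (le_trans e1 e3) (le_trans e2 e4)
            _ = 2 * (1/2) ^ n₀ := by ring
        calc |((r a t : ℚ):ℝ) - ((r b t : ℚ):ℝ)| * dist y y'
            ≤ 2 * (1/2) ^ n₀ * dist y y' := by nlinarith [hDpos]
          _ < ε := by
              rw [lt_div_iff₀ (by positivity : (0:ℝ) < 2 * dist y y' + 1)] at hn₀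
              nlinarith [hn₀, hDpos]
      obtain ⟨L, hL⟩ := cauchySeq_tendsto_of_complete hcs2
      have : γ t = L := by
        rw [hγ]
        exact hL.limUnder_eq
      rw [this]
      exact hL
    refine ⟨γ, ?_, ?_, ?_⟩
    · have h0 : ∀ n : ℕ, r n 0 = 0 := by
        intro n
        simp only [hr]
        norm_num
      have hval : ∀ n : ℕ, (c ((r n 0 : ℚ) : ℝ)).1 x₀ = y := by
        intro n
        rw [h0 n]
        simp only [Rat.cast_zero]
        rw [hc0]
        exact emb_apply hA hAfin hz1 _ hx₀A
      have hten : Tendsto (fun n => (c ((r n 0 : ℚ) : ℝ)).1 x₀) atTop (𝓝 y) := by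
        simp only [hval]
        exact tendsto_const_nhds
      simp only [hγ]
      exact hten.limUnder_eq
    · have h0 : ∀ n : ℕ, r n 1 = 1 := by
        intro n
        simp only [hr]
        rw [show (1:ℝ) * 2 ^ n = ((2 ^ n : ℤ) : ℝ) by push_cast; ring, Int.floor_intCast]
        push_cast
        rw [div_self (by positivity : ((2:ℚ)) ^ n ≠ 0)]
      have hval : ∀ n : ℕ, (c ((r n 1 : ℚ) : ℝ)).1 x₀ = y' := by
        intro n
        rw [h0 n]
        simp only [Rat.cast_one]
        rw [hc1]
        exact emb_apply hA hAfin hz1 _ hx₀A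
      have hten : Tendsto (fun n => (c ((r n 1 : ℚ) : ℝ)).1 x₀) atTop (𝓝 y') := by
        simp only [hval]
        exact tendsto_const_nhds
      simp only [hγ]
      exact hten.limUnder_eq
    · intro s hs t ht
      have h1 := (hconv s hs).dist (hconv t ht)
      have h2 : Tendsto (fun n => dist ((c ((r n s : ℚ):ℝ)).1 x₀) ((c ((r n t : ℚ):ℝ)).1 x₀))
          atTop (𝓝 (|s - t| * dist y y')) := by
        have he : ∀ n, dist ((c ((r n s : ℚ):ℝ)).1 x₀) ((c ((r n t : ℚ):ℝ)).1 x₀)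
            = |((r n s : ℚ):ℝ) - ((r n t : ℚ):ℝ)| * dist y y' :=
          fun n => hgd _ _ (hrmem n s hs) (hrmem n t ht)
        simp only [he]
        exact (((hrt s).sub (hrt t)).abs).mul_const _
      exact tendsto_nhds_unique h1 h2

  · -- Part 3 : NPC inequality in N
    intro γ hγ z' t' ht'
    have hcgeo : ∀ s ∈ Icc (0:ℝ) 1, ∀ t ∈ Icc (0:ℝ) 1,
        dist ((fun r => ι (γ r)) s) ((fun r => ι (γ r)) t)
          = |s - t| * dist ((fun r => ι (γ r)) 0) ((fun r => ι (γ r)) 1) := by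
      intro s hs t ht
      simp only
      rw [hid, hid, hγ s hs t ht]
      ring
    have hN := hnpc (fun r => ι (γ r)) hcgeo (ι z') t' ht'
    rw [hid, hid, hid, hid] at hN
    nlinarith [hN, hcA0, sq_nonneg cA, mul_pos hcA0 hcA0]

end NLS
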